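/- If f belongs to the class S_H(K) of normalized K-quasiconformal harmonic mappings of the unit disk, then f belongs to the harmonic Bergman space a^p for every p with 0 < p < 1/α_K, where α_K is the order of the class S_H(K); that is, ∫_𝔻 |f|^p dA < ∞. -/

import Mathlib

open MeasureTheory Metric Complex

open ComplexConjugate intervalIntegral

noncomputable def mphi (w z : ℂ) : ℂ := (z + w) / (1 + conj w * z)

lemma mob_ne {w z : ℂ} (hw : ‖w‖ < 1) (hz : ‖z‖ < 1) :
    1 + conj w * z ≠ 0 := by
  intro h
  have h1 : ‖conj w * z‖ < 1 := by
    rw [norm_mul, Complex.norm_conj]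
    calc ‖w‖ * ‖z‖ ≤ ‖w‖ * 1 :=
          mul_le_mul_of_nonneg_left hz.le (norm_nonneg w)
      _ < 1 := by simpa using hw
  have : conj w * z = -1 := by linear_combination h
  rw [this] at h1
  simp at h1

lemma normSq_lt_one {z : ℂ} (hz : ‖z‖ < 1) : normSq z < 1 := by
  have : ‖z‖ ^ 2 < 1 := by nlinarith [norm_nonneg z]
  rwa [Complex.sq_norm] at this

lemma mob_mem {w z : ℂ} (hw : ‖w‖ < 1) (hz : ‖z‖ < 1) :
    ‖mphi w z‖ < 1 := by
  have hnum : normSq (z + w) < normSq (1 + conj w * z) := by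
    have h1 := normSq_lt_one hz
    have h2 := normSq_lt_one hw
    simp only [normSq_apply, add_re, add_im, mul_re, mul_im, one_re, one_im, conj_re, conj_im] at *
    nlinarith
  have habs : ‖z + w‖ < ‖1 + conj w * z‖ := by
    have := Real.sqrt_lt_sqrt (normSq_nonneg _) hnum
    simpa [Complex.norm_def] using this
  rw [mphi, norm_div]
  exact (div_lt_one (lt_of_le_of_lt (norm_nonneg _) habs)).2 habs

lemma mob_inj {w a b : ℂ} (hw : ‖w‖ < 1) (ha : ‖a‖ < 1)
    (hb : ‖b‖ < 1) (hab : mphi w a = mphi w b) : a = b := by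
  have hda := mob_ne hw ha
  have hdb := mob_ne hw hb
  rw [mphi, mphi, div_eq_div_iff hda hdb] at hab
  have hw1 : conj w * w ≠ 1 := by
    intro h
    have : ‖conj w * w‖ = 1 := by rw [h]; simp
    rw [norm_mul, Complex.norm_conj] at this
    nlinarith [norm_nonneg w]
  have : (a - b) * (1 - conj w * w) = 0 := by linear_combination hab
  rcases mul_eq_zero.1 this with h | h
  · exact sub_eq_zero.1 h
  · exact absurd (by linear_combination -h : conj w * w = 1) hw1

lemma mob_zero (w : ℂ) : mphi w 0 = w := by simp [mphi]

lemma mob_hasDeriv {w z : ℂ} (hd : 1 + conj w * z ≠ 0) :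
    HasDerivAt (mphi w) ((1 - conj w * w) / (1 + conj w * z) ^ 2) z := by
  have h1 : HasDerivAt (fun z : ℂ => z + w) 1 z := by
    simpa using (hasDerivAt_id z).add_const w
  have h2 : HasDerivAt (fun z : ℂ => 1 + conj w * z) (conj w) z := by
    simpa using ((hasDerivAt_id z).const_mul (conj w)).const_add 1
  have := h1.div h2 hd
  refine this.congr_deriv ?_
  field_simp
  ring

lemma mobder_hasDeriv {w z : ℂ} (hd : 1 + conj w * z ≠ 0) :
    HasDerivAt (fun z => (1 - conj w * w) / (1 + conj w * z) ^ 2)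
      (-2 * conj w * (1 - conj w * w) / (1 + conj w * z) ^ 3) z := by
  have h2 : HasDerivAt (fun z : ℂ => 1 + conj w * z) (conj w) z := by
    simpa using ((hasDerivAt_id z).const_mul (conj w)).const_add 1
  have h3 : HasDerivAt (fun z : ℂ => (1 + conj w * z) ^ 2)
      (2 * (1 + conj w * z) ^ 1 * conj w) z := h2.pow 2
  have h4 := (hasDerivAt_const z (1 - conj w * w)).div h3 (pow_ne_zero 2 hd)
  refine h4.congr_deriv ?_
  field_simp
  ring

/-- `f = h + conj g` belongs to the class `S_H` of sense-preserving univalent harmonic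
mappings of the unit disk, normalized by `h(0) = g(0) = 0`, `h'(0) = 1`. -/
def IsSH (h g : ℂ → ℂ) : Prop :=
  DifferentiableOn ℂ h (ball 0 1) ∧
  DifferentiableOn ℂ g (ball 0 1) ∧
  h 0 = 0 ∧ g 0 = 0 ∧ deriv h 0 = 1 ∧
  (∀ z ∈ ball (0 : ℂ) 1, ‖deriv g z‖ < ‖deriv h z‖) ∧
  Set.InjOn (fun z => h z + (starRingEnd ℂ) (g z)) (ball 0 1)

/-- `f = h + conj g` belongs to `S_H(K)`: the `K`-quasiconformal members of `S_H`. -/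
def IsSHK (K : ℝ) (h g : ℂ → ℂ) : Prop :=
  IsSH h g ∧
  ∀ z ∈ ball (0 : ℂ) 1,
    ‖deriv g z‖ ≤ (K - 1) / (K + 1) * ‖deriv h z‖

/-- The order `α_K = sup_{f ∈ S_H(K)} |h''(0)|/2` of the class `S_H(K)`. -/
noncomputable def orderSHK (K : ℝ) : ℝ :=
  sSup {x : ℝ | ∃ h g : ℂ → ℂ, IsSHK K h g ∧ x = ‖deriv (deriv h) 0‖ / 2}





lemma mem_ball_one {z : ℂ} : z ∈ ball (0 : ℂ) 1 ↔ ‖z‖ < 1 := by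
  simp [mem_ball_zero_iff]

lemma one_sub_conj_ne {w : ℂ} (hw : ‖w‖ < 1) : 1 - conj w * w ≠ 0 := by
  intro h
  have h1 : conj w * w = 1 := by linear_combination -h
  have : ‖conj w * w‖ = 1 := by rw [h1]; simp
  rw [norm_mul, Complex.norm_conj] at this
  nlinarith [norm_nonneg w]

lemma key_transform (K : ℝ) (h g : ℂ → ℂ) (hf : IsSHK K h g) {w : ℂ}
    (hw : w ∈ ball (0 : ℂ) 1) :
    ∃ H G : ℂ → ℂ, IsSHK K H G ∧
      deriv (deriv H) 0 =
        (1 - conj w * w) * deriv (deriv h) w / deriv h w - 2 * conj w := by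
  obtain ⟨⟨hdh, hdg, h0, g0, h'0, hsp, hinj⟩, hqc⟩ := hf
  rw [mem_ball_one] at hw
  -- basic facts
  have hh'ne : ∀ z ∈ ball (0 : ℂ) 1, deriv h z ≠ 0 := by
    intro z hz hz0
    have := hsp z hz
    rw [hz0] at this
    simp at this
    exact absurd this (not_lt.2 (norm_nonneg _))
  have hwm : w ∈ ball (0 : ℂ) 1 := mem_ball_one.2 hw
  set c : ℂ := (1 - conj w * w) * deriv h w with hc
  have hcne : c ≠ 0 := mul_ne_zero (one_sub_conj_ne hw) (hh'ne w hwm)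
  set ψ : ℂ → ℂ := fun z => (1 - conj w * w) / (1 + conj w * z) ^ 2 with hψ
  set H : ℂ → ℂ := fun z => (h (mphi w z) - h w) / c with hH
  set G : ℂ → ℂ := fun z => (g (mphi w z) - g w) / conj c with hG
  have hana : AnalyticOnNhd ℂ h (ball 0 1) := hdh.analyticOnNhd isOpen_ball
  have hanag : AnalyticOnNhd ℂ g (ball 0 1) := hdg.analyticOnNhd isOpen_ball
  -- membership of mphi w z
  have hmem : ∀ z ∈ ball (0 : ℂ) 1, mphi w z ∈ ball (0 : ℂ) 1 := fun z hz =>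
    mem_ball_one.2 (mob_mem hw (mem_ball_one.1 hz))
  -- derivative formulas
  have hHd : ∀ z ∈ ball (0 : ℂ) 1,
      HasDerivAt H (deriv h (mphi w z) * ψ z / c) z := by
    intro z hz
    have h1 : HasDerivAt h (deriv h (mphi w z)) (mphi w z) :=
      ((hdh.differentiableAt (isOpen_ball.mem_nhds (hmem z hz))).hasDerivAt)
    have h2 := h1.comp z (mob_hasDeriv (mob_ne hw (mem_ball_one.1 hz)))
    exact ((h2.sub_const (h w)).div_const c)
  have hGd : ∀ z ∈ ball (0 : ℂ) 1,
      HasDerivAt G (deriv g (mphi w z) * ψ z / conj c) z := by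
    intro z hz
    have h1 : HasDerivAt g (deriv g (mphi w z)) (mphi w z) :=
      ((hdg.differentiableAt (isOpen_ball.mem_nhds (hmem z hz))).hasDerivAt)
    have h2 := h1.comp z (mob_hasDeriv (mob_ne hw (mem_ball_one.1 hz)))
    exact ((h2.sub_const (g w)).div_const (conj c))
  have hHderiv : ∀ z ∈ ball (0 : ℂ) 1, deriv H z = deriv h (mphi w z) * ψ z / c :=
    fun z hz => (hHd z hz).deriv
  have hGderiv : ∀ z ∈ ball (0 : ℂ) 1, deriv G z = deriv g (mphi w z) * ψ z / conj c :=
    fun z hz => (hGd z hz).deriv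
  have hψ0 : ψ 0 = 1 - conj w * w := by simp [hψ]
  have hzero : (0 : ℂ) ∈ ball (0 : ℂ) 1 := by simp [mem_ball_one]
  -- second derivative at 0
  have hevent : deriv H =ᶠ[nhds 0] fun z => deriv h (mphi w z) * ψ z / c := by
    filter_upwards [isOpen_ball.mem_nhds hzero] with z hz using hHderiv z hz
  have hd2 : HasDerivAt (fun z => deriv h (mphi w z) * ψ z / c)
      ((deriv (deriv h) w * ψ 0 * ψ 0 +
        deriv h w * (-2 * conj w * (1 - conj w * w) / (1 + conj w * 0) ^ 3)) / c) 0 := by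
    have h1 : HasDerivAt (deriv h) (deriv (deriv h) w) (mphi w 0) := by
      rw [mob_zero]
      exact (hana.deriv w hwm).differentiableAt.hasDerivAt
    have h2 := h1.comp 0 (mob_hasDeriv (w := w) (z := 0) (by simpa using mob_ne hw (by simp)))
    have h3 := h2.mul (mobder_hasDeriv (w := w) (z := 0) (by simpa using mob_ne hw (by simp)))
    have h4 := h3.div_const c
    simp only [Function.comp_apply] at h4
    rw [mob_zero] at h4
    exact h4
  have hHH : deriv (deriv H) 0 =
      (1 - conj w * w) * deriv (deriv h) w / deriv h w - 2 * conj w := by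
    rw [hevent.deriv_eq, hd2.deriv, hψ0, hc]
    have := hh'ne w hwm
    have := one_sub_conj_ne hw
    field_simp
    ring
  refine ⟨H, G, ⟨⟨?_, ?_, ?_, ?_, ?_, ?_, ?_⟩, ?_⟩, hHH⟩
  · exact fun z hz => ((hHd z hz).differentiableAt).differentiableWithinAt
  · exact fun z hz => ((hGd z hz).differentiableAt).differentiableWithinAt
  · simp [hH, mob_zero]
  · simp [hG, mob_zero]
  · rw [hHderiv 0 hzero, mob_zero, hψ0, hc]
    have := hh'ne w hwm
    have := one_sub_conj_ne hw
    field_simp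
  · intro z hz
    rw [hHderiv z hz, hGderiv z hz]
    have hψne : ψ z ≠ 0 :=
      div_ne_zero (one_sub_conj_ne hw) (pow_ne_zero 2 (mob_ne hw (mem_ball_one.1 hz)))
    have hψpos : 0 < ‖ψ z‖ := norm_pos_iff.mpr hψne
    have hcpos : 0 < ‖c‖ := norm_pos_iff.mpr hcne
    simp only [norm_div, norm_mul, Complex.norm_conj]
    have hlt := hsp (mphi w z) (hmem z hz)
    gcongr
  · -- injectivity
    intro a ha b hb hab
    have e : ∀ z : ℂ, H z + conj (G z) =
        ((h (mphi w z) + conj (g (mphi w z))) - (h w + conj (g w))) / c := by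
      intro z
      simp only [hH, hG, map_div₀, map_sub, Complex.conj_conj]
      ring
    simp only [e a, e b] at hab
    have hab2 : h (mphi w a) + conj (g (mphi w a)) = h (mphi w b) + conj (g (mphi w b)) := by
      field_simp at hab
      linear_combination hab
    have := hinj (hmem a ha) (hmem b hb) hab2
    exact mob_inj hw (mem_ball_one.1 ha) (mem_ball_one.1 hb) this
  · -- quasiconformality
    intro z hz
    rw [hHderiv z hz, hGderiv z hz]
    have hcpos : 0 < ‖c‖ := norm_pos_iff.mpr hcne
    simp only [norm_div, norm_mul, Complex.norm_conj]
    have hq := hqc (mphi w z) (hmem z hz)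
    calc ‖deriv g (mphi w z)‖ * ‖ψ z‖ / ‖c‖
        ≤ ((K - 1) / (K + 1) * ‖deriv h (mphi w z)‖) * ‖ψ z‖ /
          ‖c‖ := by gcongr
      _ = (K - 1) / (K + 1) *
          (‖deriv h (mphi w z)‖ * ‖ψ z‖ / ‖c‖) := by ring

noncomputable def Lam (α s : ℝ) : ℝ :=
  -((α + 1) * Real.log (1 - s)) + (α - 1) * Real.log (1 + s)

noncomputable def mfun (α t : ℝ) : ℝ := (α + 1) / (1 - t) + (α - 1) / (1 + t)

lemma abs_ray {u : ℂ} (hu : ‖u‖ = 1) (t : ℝ) :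
    ‖(t : ℂ) * u‖ = |t| := by
  rw [norm_mul, hu, mul_one, Complex.norm_real, Real.norm_eq_abs]

lemma ball_mem_ray {u : ℂ} (hu : ‖u‖ = 1) {t : ℝ} (h1 : |t| < 1) :
    (t : ℂ) * u ∈ ball (0 : ℂ) 1 := by
  rw [mem_ball_zero_iff, abs_ray hu]
  exact h1

lemma lam_hasDeriv {α t : ℝ} (h1 : -1 < t) (h2 : t < 1) :
    HasDerivAt (Lam α) (mfun α t) t := by
  have d1 : HasDerivAt (fun s : ℝ => 1 - s) (-1) t := by
    simpa using (hasDerivAt_id t).const_sub 1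
  have d2 : HasDerivAt (fun s : ℝ => 1 + s) 1 t := by
    simpa using (hasDerivAt_id t).const_add 1
  have l1 : HasDerivAt (fun s : ℝ => Real.log (1 - s)) (-1 / (1 - t)) t :=
    d1.log (by linarith : (1:ℝ) - t ≠ 0)
  have l2 : HasDerivAt (fun s : ℝ => Real.log (1 + s)) (1 / (1 + t)) t :=
    d2.log (by linarith : (1:ℝ) + t ≠ 0)
  have h := ((l1.const_mul (α + 1)).neg).add (l2.const_mul (α - 1))
  refine h.congr_deriv ?_
  unfold mfun
  field_simp



lemma gronwall_ray {α : ℝ} {φ : ℂ → ℂ} (hφ : AnalyticOnNhd ℂ φ (ball 0 1))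
    (hne : ∀ z ∈ ball (0 : ℂ) 1, φ z ≠ 0)
    (hm : ∀ w ∈ ball (0 : ℂ) 1,
      ‖deriv φ w / φ w‖ ≤ mfun α (‖w‖))
    {u : ℂ} (hu : ‖u‖ = 1) {s : ℝ} (h0 : 0 ≤ s) (h1 : s < 1) :
    ‖φ ((s : ℂ) * u)‖ ≤ ‖φ 0‖ * Real.exp (Lam α s) := by
  set q : ℝ → ℂ := fun t => u * deriv φ ((t : ℂ) * u) / φ ((t : ℂ) * u) with hq
  set I : Set ℝ := Set.Ioo (-1 : ℝ) 1 with hI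
  have hIopen : IsOpen I := isOpen_Ioo
  have hmemI : ∀ t : ℝ, t ∈ I → (t : ℂ) * u ∈ ball (0 : ℂ) 1 := by
    intro t ht
    exact ball_mem_ray hu (abs_lt.2 ⟨ht.1, ht.2⟩)
  have hcont_ray : Continuous fun t : ℝ => (t : ℂ) * u :=
    (Complex.continuous_ofReal).mul continuous_const
  have hcontq : ∀ t ∈ I, ContinuousAt q t := by
    intro t ht
    have hb := hmemI t ht
    have c1 : ContinuousAt (deriv φ ∘ fun t : ℝ => (t : ℂ) * u) t :=
      ContinuousAt.comp ((hφ.deriv _ hb).continuousAt) hcont_ray.continuousAt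
    have c2 : ContinuousAt (φ ∘ fun t : ℝ => (t : ℂ) * u) t :=
      ContinuousAt.comp ((hφ _ hb).continuousAt) hcont_ray.continuousAt
    exact (continuousAt_const.mul c1).div c2 (hne _ hb)
  have hsubI : Set.Icc (0:ℝ) s ⊆ I := fun t ht => ⟨by linarith [ht.1], lt_of_le_of_lt ht.2 h1⟩
  have hcontOn : ContinuousOn q (Set.Icc 0 s) := fun t ht =>
    ((hcontq t (hsubI ht)).continuousWithinAt)
  set B : ℝ → ℂ := fun x => ∫ t in (0:ℝ)..x, q t with hB
  have hBd : ∀ x ∈ Set.Icc (0:ℝ) s, HasDerivAt B (q x) x := by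
    intro x hx
    have hsub : Set.uIcc (0:ℝ) x ⊆ Set.Icc 0 s := by
      rw [Set.uIcc_of_le hx.1]
      exact Set.Icc_subset_Icc le_rfl hx.2
    have hint : IntervalIntegrable q volume 0 x := (hcontOn.mono hsub).intervalIntegrable
    exact integral_hasDerivAt_right hint
      (ContinuousAt.stronglyMeasurableAtFilter hIopen hcontq x (hsubI hx))
      (hcontq x (hsubI hx))
  -- the function Φ = φ(ray) * exp(-B) has zero derivative on [0, s]
  set F : ℝ → ℂ := fun x => φ ((x : ℂ) * u) with hF
  have hFd : ∀ x ∈ Set.Icc (0:ℝ) s, HasDerivAt F (u * deriv φ ((x : ℂ) * u)) x := by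
    intro x hx
    have hb := hmemI x (hsubI hx)
    have houter : HasDerivAt φ (deriv φ ((x : ℂ) * u)) ((x : ℂ) * u) :=
      ((hφ _ hb).differentiableAt.hasDerivAt)
    have hinner : HasDerivAt (fun t : ℝ => (t : ℂ) * u) u x := by
      simpa using (Complex.ofRealCLM.hasDerivAt (x := x)).mul_const u
    have := HasDerivAt.scomp x houter hinner
    rw [show u * deriv φ ((x : ℂ) * u) = u • deriv φ ((x : ℂ) * u) by rw [smul_eq_mul]]
    exact this
  have hPhi : ∀ x ∈ Set.Icc (0:ℝ) s,
      HasDerivAt (fun y => F y * Complex.exp (-B y)) 0 x := by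
    intro x hx
    have hb := hmemI x (hsubI hx)
    have he : HasDerivAt (fun y => Complex.exp (-B y))
        (Complex.exp (-B x) * (-q x)) x := ((hBd x hx).neg).cexp
    have := (hFd x hx).mul he
    refine this.congr_deriv ?_
    have e : φ ((x:ℂ)*u) * (u * deriv φ ((x:ℂ)*u) / φ ((x:ℂ)*u)) = u * deriv φ ((x:ℂ)*u) := by
      field_simp [hne _ hb]
    simp only [hq, hF]
    linear_combination (-Complex.exp (-B x)) * e
  -- conclude Φ s = Φ 0
  have hconst : F s * Complex.exp (-B s) = F 0 * Complex.exp (-B 0) := by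
    have hzero := integral_eq_sub_of_hasDerivAt
      (f := fun y => F y * Complex.exp (-B y)) (f' := fun _ => (0:ℂ))
      (fun x hx => hPhi x (by rwa [Set.uIcc_of_le h0] at hx)) intervalIntegrable_const
    have : F s * Complex.exp (-B s) - F 0 * Complex.exp (-B 0) = 0 := by
      simpa using hzero.symm
    exact sub_eq_zero.1 this
  have hB0 : B 0 = 0 := integral_same
  have hFs : F s = F 0 * Complex.exp (B s) := by
    rw [hB0] at hconst
    simp only [neg_zero, Complex.exp_zero, mul_one] at hconst
    have h2 : F s * Complex.exp (-B s) * Complex.exp (B s) = F 0 * Complex.exp (B s) := by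
      rw [hconst]
    rwa [mul_assoc, ← Complex.exp_add, neg_add_cancel, Complex.exp_zero, mul_one] at h2
  -- bound on Re (B s)
  have hReB : (B s).re ≤ Lam α s := by
    have hBset : B s = ∫ t in Set.Ioc (0:ℝ) s, q t := intervalIntegral.integral_of_le h0
    have hqint : IntegrableOn q (Set.Ioc 0 s) :=
      (hcontOn.integrableOn_Icc).mono_set Set.Ioc_subset_Icc_self
    have hre : (B s).re = ∫ t in Set.Ioc (0:ℝ) s, (q t).re := by
      have h' := integral_re hqint
      rw [hBset]
      simpa [RCLike.re_eq_complex_re] using h'.symm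
    have hmcont : ContinuousOn (fun t => mfun α t) (Set.Icc 0 s) := by
      intro t ht
      have htI := hsubI ht
      have hne1 : (1:ℝ) - t ≠ 0 := by have := htI.2; intro hh; linarith
      have hne2 : (1:ℝ) + t ≠ 0 := by have := htI.1; intro hh; linarith
      apply ContinuousAt.continuousWithinAt
      unfold mfun
      exact (continuousAt_const.div
          ((continuous_const.sub continuous_id).continuousAt) hne1).add
        (continuousAt_const.div ((continuous_const.add continuous_id).continuousAt) hne2)
    have hmint : IntegrableOn (fun t => mfun α t) (Set.Ioc 0 s) :=
      (hmcont.integrableOn_Icc).mono_set Set.Ioc_subset_Icc_self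
    have hmono : (∫ t in Set.Ioc (0:ℝ) s, (q t).re) ≤ ∫ t in Set.Ioc (0:ℝ) s, mfun α t := by
      refine setIntegral_mono_on hqint.re hmint measurableSet_Ioc ?_
      intro t ht
      have ht' : t ∈ Set.Icc (0:ℝ) s := Set.Ioc_subset_Icc_self ht
      have hb := hmemI t (hsubI ht')
      calc (q t).re ≤ ‖q t‖ := Complex.re_le_norm _
        _ = ‖deriv φ ((t:ℂ)*u) / φ ((t:ℂ)*u)‖ := by
            simp only [hq, norm_div, norm_mul, hu, one_mul]
        _ ≤ mfun α (‖(t:ℂ)*u‖) := hm _ hb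
        _ = mfun α t := by rw [abs_ray hu, _root_.abs_of_nonneg ht'.1]
    have hmval : (∫ t in Set.Ioc (0:ℝ) s, mfun α t) = Lam α s := by
      rw [← intervalIntegral.integral_of_le h0]
      have := integral_eq_sub_of_hasDerivAt (f := Lam α) (f' := fun t => mfun α t)
        (fun t ht => by
          rw [Set.uIcc_of_le h0] at ht
          have htI := hsubI ht
          exact lam_hasDeriv htI.1 htI.2)
        ((hmcont.mono (by rw [Set.uIcc_of_le h0])).intervalIntegrable)
      rw [this]
      simp [Lam]
    rw [hre]
    exact hmono.trans hmval.le
  have hF0 : F 0 = φ 0 := by simp [hF]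
  calc ‖φ ((s : ℂ) * u)‖ = ‖F s‖ := rfl
    _ = ‖F 0‖ * Real.exp ((B s).re) := by
        rw [hFs, norm_mul, Complex.norm_exp]
    _ ≤ ‖F 0‖ * Real.exp (Lam α s) :=
        mul_le_mul_of_nonneg_left (Real.exp_le_exp.2 hReB) (norm_nonneg _)
    _ = ‖φ 0‖ * Real.exp (Lam α s) := by rw [hF0]



lemma pow_deriv_aux {α : ℝ} (hα : 0 < α) {t : ℝ} (ht : t < 1) :
    HasDerivAt (fun t : ℝ => (1 - t) ^ (-α)) ((1 - t) ^ (-(α + 1)) * α) t := by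
  have d1 : HasDerivAt (fun s : ℝ => 1 - s) (-1) t := by
    simpa using (hasDerivAt_id t).const_sub 1
  have h2 : HasDerivAt (fun x : ℝ => x ^ (-α)) (-α * (1 - t) ^ (-α - 1)) (1 - t) :=
    Real.hasDerivAt_rpow_const (Or.inl (by linarith))
  have := h2.comp t d1
  refine this.congr_deriv ?_
  have : -(α + 1) = -α - 1 := by ring
  rw [this]
  ring

lemma integral_growth {α c : ℝ} (hα : 0 < α) (hc : 0 ≤ c) {w : ℂ → ℂ}
    (hw : DifferentiableOn ℂ w (ball 0 1)) (hw0 : w 0 = 0)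
    (hbound : ∀ u : ℂ, ‖u‖ = 1 → ∀ t : ℝ, 0 ≤ t → t < 1 →
      ‖deriv w ((t : ℂ) * u)‖ ≤ c * (1 - t) ^ (-(α + 1))) :
    ∀ z ∈ ball (0 : ℂ) 1,
      ‖w z‖ ≤ c / α * (1 - ‖z‖) ^ (-α) := by
  intro z hz
  rcases eq_or_ne z 0 with rfl | hz0
  · rw [hw0]
    simp only [norm_zero]
    positivity
  set r : ℝ := ‖z‖ with hr
  have hr0 : 0 < r := norm_pos_iff.mpr hz0
  have hr1 : r < 1 := by rwa [mem_ball_zero_iff] at hz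
  set u : ℂ := z / (r : ℂ) with hu'
  have hu : ‖u‖ = 1 := by
    rw [hu', norm_div, Complex.norm_real, Real.norm_eq_abs, _root_.abs_of_nonneg hr0.le, ← hr, div_self hr0.ne']
  have hzu : z = (r : ℂ) * u := by
    rw [hu', mul_div_cancel₀]
    simpa using hr0.ne'
  have hana : AnalyticOnNhd ℂ w (ball 0 1) := hw.analyticOnNhd isOpen_ball
  -- FTC along the ray
  have hFd : ∀ t ∈ Set.uIcc (0:ℝ) r,
      HasDerivAt (fun x : ℝ => w ((x : ℂ) * u)) (u * deriv w ((t : ℂ) * u)) t := by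
    intro t ht
    rw [Set.uIcc_of_le hr0.le] at ht
    have hb : (t : ℂ) * u ∈ ball (0:ℂ) 1 :=
      ball_mem_ray hu (by rw [_root_.abs_of_nonneg ht.1]; exact lt_of_le_of_lt ht.2 hr1)
    have houter : HasDerivAt w (deriv w ((t : ℂ) * u)) ((t : ℂ) * u) :=
      ((hana _ hb).differentiableAt.hasDerivAt)
    have hinner : HasDerivAt (fun x : ℝ => (x : ℂ) * u) u t := by
      simpa using (Complex.ofRealCLM.hasDerivAt (x := t)).mul_const u
    have := HasDerivAt.scomp t houter hinner
    rw [show u * deriv w ((t : ℂ) * u) = u • deriv w ((t : ℂ) * u) by rw [smul_eq_mul]]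
    exact this
  have hcontd : ContinuousOn (fun t : ℝ => u * deriv w ((t : ℂ) * u)) (Set.uIcc (0:ℝ) r) := by
    intro t ht
    rw [Set.uIcc_of_le hr0.le] at ht
    have hb : (t : ℂ) * u ∈ ball (0:ℂ) 1 :=
      ball_mem_ray hu (by rw [_root_.abs_of_nonneg ht.1]; exact lt_of_le_of_lt ht.2 hr1)
    have hcont_ray : Continuous fun t : ℝ => (t : ℂ) * u :=
      (Complex.continuous_ofReal).mul continuous_const
    have c1 : ContinuousAt (deriv w ∘ fun t : ℝ => (t : ℂ) * u) t :=
      ContinuousAt.comp ((hana.deriv _ hb).continuousAt) hcont_ray.continuousAt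
    exact (continuousAt_const.mul c1).continuousWithinAt
  have hint : IntervalIntegrable (fun t : ℝ => u * deriv w ((t : ℂ) * u)) volume 0 r :=
    hcontd.intervalIntegrable
  have hftc := integral_eq_sub_of_hasDerivAt hFd hint
  have hwz : w z = ∫ t in (0:ℝ)..r, u * deriv w ((t : ℂ) * u) := by
    rw [hftc]
    simp [hw0, ← hzu]
  -- bound the integral
  have hnorm : ‖w z‖ ≤ ∫ t in (0:ℝ)..r, c * (1 - t) ^ (-(α + 1)) := by
    rw [hwz]
    refine (intervalIntegral.norm_integral_le_integral_norm hr0.le).trans ?_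
    have hcont2 : ContinuousOn (fun t : ℝ => c * (1 - t) ^ (-(α + 1))) (Set.Icc 0 r) := by
      intro t ht
      have h1t : (0:ℝ) < 1 - t := by have := lt_of_le_of_lt ht.2 hr1; linarith
      have c1 : ContinuousAt ((fun x : ℝ => x ^ (-(α+1))) ∘ fun t : ℝ => 1 - t) t :=
        ContinuousAt.comp (Real.continuousAt_rpow_const _ _ (Or.inl h1t.ne'))
          ((continuous_const.sub continuous_id).continuousAt)
      exact (continuousAt_const.mul c1).continuousWithinAt
    refine intervalIntegral.integral_mono_on hr0.le (hint.norm) ?_ ?_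
    · exact (hcont2.mono (Set.uIcc_of_le hr0.le).subset).intervalIntegrable
    · intro t ht
      have ht1 : t < 1 := lt_of_le_of_lt ht.2 hr1
      have := hbound u hu t ht.1 ht1
      calc ‖u * deriv w ((t:ℂ)*u)‖ = ‖deriv w ((t:ℂ)*u)‖ := by
            rw [norm_mul, hu, one_mul]
        _ ≤ c * (1 - t) ^ (-(α + 1)) := this
  -- compute the majorant integral
  have hNder : ∀ t ∈ Set.uIcc (0:ℝ) r,
      HasDerivAt (fun t : ℝ => c / α * (1 - t) ^ (-α)) (c * (1 - t) ^ (-(α + 1))) t := by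
    intro t ht
    rw [Set.uIcc_of_le hr0.le] at ht
    have ht1 : t < 1 := lt_of_le_of_lt ht.2 hr1
    have := (pow_deriv_aux hα ht1).const_mul (c / α)
    refine this.congr_deriv ?_
    field_simp
  have hmaj_cont : ContinuousOn (fun t : ℝ => c * (1 - t) ^ (-(α + 1))) (Set.Icc 0 r) := by
    intro t ht
    have h1t : (0:ℝ) < 1 - t := by have := lt_of_le_of_lt ht.2 hr1; linarith
    have c1 : ContinuousAt ((fun x : ℝ => x ^ (-(α+1))) ∘ fun t : ℝ => 1 - t) t :=
      ContinuousAt.comp (Real.continuousAt_rpow_const _ _ (Or.inl h1t.ne'))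
        ((continuous_const.sub continuous_id).continuousAt)
    exact (continuousAt_const.mul c1).continuousWithinAt
  have hval := integral_eq_sub_of_hasDerivAt hNder
    ((hmaj_cont.mono (Set.uIcc_of_le hr0.le).subset).intervalIntegrable)
  have hfinal : (∫ t in (0:ℝ)..r, c * (1 - t) ^ (-(α + 1)))
      ≤ c / α * (1 - r) ^ (-α) := by
    rw [hval]
    have : (0:ℝ) ≤ c / α * (1 - (0:ℝ)) ^ (-α) := by positivity
    linarith
  exact hnorm.trans hfinal






lemma key_bound {K : ℝ} {h g : ℂ → ℂ} (hf : IsSHK K h g)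
    (hB : BddAbove {x : ℝ | ∃ h g : ℂ → ℂ, IsSHK K h g ∧
      x = ‖deriv (deriv h) 0‖ / 2})
    {w : ℂ} (hw : w ∈ ball (0 : ℂ) 1) :
    ‖(1 - conj w * w) * deriv (deriv h) w / deriv h w - 2 * conj w‖
      ≤ 2 * orderSHK K := by
  obtain ⟨H, G, hHG, hval⟩ := key_transform K h g hf hw
  have hmem : ‖deriv (deriv H) 0‖ / 2 ∈
      {x : ℝ | ∃ h g : ℂ → ℂ, IsSHK K h g ∧
        x = ‖deriv (deriv h) 0‖ / 2} := ⟨H, G, hHG, rfl⟩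
  have hle := le_csSup hB hmem
  rw [hval] at hle
  unfold orderSHK
  linarith

lemma ratio_bound {K : ℝ} {h g : ℂ → ℂ} (hf : IsSHK K h g)
    (hB : BddAbove {x : ℝ | ∃ h g : ℂ → ℂ, IsSHK K h g ∧
      x = ‖deriv (deriv h) 0‖ / 2})
    (hα : 0 < orderSHK K)
    {w : ℂ} (hw : w ∈ ball (0 : ℂ) 1) :
    ‖deriv (deriv h) w / deriv h w‖ ≤ mfun (orderSHK K) (‖w‖) := by
  have hkb := key_bound hf hB hw
  set α := orderSHK K
  set a := ‖w‖ with ha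
  have ha0 : 0 ≤ a := norm_nonneg w
  have ha1 : a < 1 := by rwa [mem_ball_zero_iff] at hw
  set X : ℂ := deriv (deriv h) w / deriv h w with hX
  have hcw : (1 - conj w * w) = ((1 - a ^ 2 : ℝ) : ℂ) := by
    have : conj w * w = (normSq w : ℂ) := by
      rw [mul_comm, Complex.mul_conj]
    rw [this, Complex.normSq_eq_norm_sq, ← ha]
    push_cast
    ring
  have habs1 : ‖(1 - conj w * w) * X‖ ≤ 2 * α + 2 * a := by
    have h1 : ‖(1 - conj w * w) * X‖
        ≤ ‖(1 - conj w * w) * X - 2 * conj w‖ + ‖2 * conj w‖ := by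
      calc ‖(1 - conj w * w) * X‖
          = ‖((1 - conj w * w) * X - 2 * conj w) + 2 * conj w‖ := by ring_nf
        _ ≤ _ := norm_add_le _ _
    have h2 : ‖2 * conj w‖ = 2 * a := by
      rw [norm_mul, Complex.norm_conj, ← ha]
      simp
    have h3 : (1 - conj w * w) * X = (1 - conj w * w) * deriv (deriv h) w / deriv h w := by
      rw [hX]; ring
    have hkb' : ‖(1 - conj w * w) * X - 2 * conj w‖ ≤ 2 * α := by
      rw [h3]; exact hkb
    rw [h2] at h1
    linarith
  have habs2 : ‖(1 - conj w * w) * X‖ = (1 - a ^ 2) * ‖X‖ := by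
    rw [hcw, norm_mul, Complex.norm_real, Real.norm_eq_abs, _root_.abs_of_nonneg (by nlinarith)]
  have h1a : (0:ℝ) < 1 - a := by linarith
  have h2a : (0:ℝ) < 1 + a := by linarith
  have hXb : ‖X‖ ≤ (2 * α + 2 * a) / (1 - a ^ 2) := by
    rw [le_div_iff₀ (by nlinarith : (0:ℝ) < 1 - a ^ 2)]
    calc ‖X‖ * (1 - a ^ 2) = (1 - a ^ 2) * ‖X‖ := mul_comm _ _
      _ ≤ 2 * α + 2 * a := by rw [← habs2]; exact habs1
  have : (2 * α + 2 * a) / (1 - a ^ 2) = mfun α a := by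
    unfold mfun
    have hne1 : (1:ℝ) - a ≠ 0 := by linarith
    have hne2 : (1:ℝ) + a ≠ 0 := by linarith
    have hne3 : (1:ℝ) - a ^ 2 ≠ 0 := by nlinarith
    field_simp
    ring
  rw [← this]
  exact hXb

lemma exp_lam_le {α s : ℝ} (hα : 0 < α) (h0 : 0 ≤ s) (h1 : s < 1) :
    Real.exp (Lam α s) ≤ 2 ^ α * (1 - s) ^ (-(α + 1)) := by
  have h1s : (0:ℝ) < 1 - s := by linarith
  have h2s : (0:ℝ) < 1 + s := by linarith
  rw [Lam, Real.exp_add]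
  have e1 : Real.exp (-((α + 1) * Real.log (1 - s))) = (1 - s) ^ (-(α + 1)) := by
    rw [Real.rpow_def_of_pos h1s]
    congr 1
    ring
  have e2 : Real.exp ((α - 1) * Real.log (1 + s)) = (1 + s) ^ (α - 1) := by
    rw [Real.rpow_def_of_pos h2s]
    congr 1
    ring
  rw [e1, e2]
  have e3 : (1 + s) ^ (α - 1) ≤ 2 ^ α := by
    rcases le_or_gt 1 α with hα1 | hα1
    · calc (1 + s) ^ (α - 1) ≤ 2 ^ (α - 1) :=
            Real.rpow_le_rpow (by linarith) (by linarith) (by linarith)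
        _ ≤ 2 ^ α := Real.rpow_le_rpow_of_exponent_le (by norm_num) (by linarith)
    · calc (1 + s) ^ (α - 1) ≤ 1 :=
            Real.rpow_le_one_of_one_le_of_nonpos (by linarith) (by linarith)
        _ ≤ 2 ^ α := Real.one_le_rpow (by norm_num) hα.le
  calc (1 - s) ^ (-(α + 1)) * (1 + s) ^ (α - 1)
      ≤ (1 - s) ^ (-(α + 1)) * 2 ^ α := by
        apply mul_le_mul_of_nonneg_left e3 (Real.rpow_nonneg h1s.le _)
    _ = 2 ^ α * (1 - s) ^ (-(α + 1)) := mul_comm _ _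

lemma f_growth {K : ℝ} {h g : ℂ → ℂ} (hf : IsSHK K h g)
    (hB : BddAbove {x : ℝ | ∃ h g : ℂ → ℂ, IsSHK K h g ∧
      x = ‖deriv (deriv h) 0‖ / 2})
    (hα : 0 < orderSHK K) :
    ∀ z ∈ ball (0 : ℂ) 1,
      ‖h z + (starRingEnd ℂ) (g z)‖ ≤
        (2 * ((2:ℝ) ^ orderSHK K / orderSHK K)) * (1 - ‖z‖) ^ (-(orderSHK K)) := by
  intro z hz
  set α := orderSHK K
  obtain ⟨⟨hdh, hdg, h0, g0, h'0, hsp, hinj⟩, hqc⟩ := hf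
  have hana : AnalyticOnNhd ℂ h (ball 0 1) := hdh.analyticOnNhd isOpen_ball
  have hne : ∀ z ∈ ball (0:ℂ) 1, deriv h z ≠ 0 := by
    intro z hz hz0
    have := hsp z hz
    rw [hz0] at this
    simp at this
    exact absurd this (not_lt.2 (norm_nonneg _))
  have hm : ∀ w ∈ ball (0:ℂ) 1,
      ‖deriv (deriv h) w / deriv h w‖ ≤ mfun α (‖w‖) :=
    fun w hw => ratio_bound ⟨⟨hdh, hdg, h0, g0, h'0, hsp, hinj⟩, hqc⟩ hB hα hw
  have hraybound : ∀ u : ℂ, ‖u‖ = 1 → ∀ t : ℝ, 0 ≤ t → t < 1 →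
      ‖deriv h ((t : ℂ) * u)‖ ≤ (2:ℝ)^α * (1 - t) ^ (-(α + 1)) := by
    intro u hu t ht0 ht1
    have := gronwall_ray hana.deriv hne hm hu ht0 ht1
    rw [h'0] at this
    simp only [norm_one, one_mul] at this
    exact this.trans (exp_lam_le hα ht0 ht1)
  have hgbound : ∀ u : ℂ, ‖u‖ = 1 → ∀ t : ℝ, 0 ≤ t → t < 1 →
      ‖deriv g ((t : ℂ) * u)‖ ≤ (2:ℝ)^α * (1 - t) ^ (-(α + 1)) := by
    intro u hu t ht0 ht1
    have hb : (t:ℂ) * u ∈ ball (0:ℂ) 1 := ball_mem_ray hu (by rwa [_root_.abs_of_nonneg ht0])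
    exact (hsp _ hb).le.trans (hraybound u hu t ht0 ht1)
  have hH := integral_growth hα (Real.rpow_nonneg (by norm_num) α) hdh h0 hraybound z hz
  have hG := integral_growth hα (Real.rpow_nonneg (by norm_num) α) hdg g0 hgbound z hz
  calc ‖h z + (starRingEnd ℂ) (g z)‖
      ≤ ‖h z‖ + ‖(starRingEnd ℂ) (g z)‖ := norm_add_le _ _
    _ = ‖h z‖ + ‖g z‖ := by rw [Complex.norm_conj]
    _ ≤ (2:ℝ)^α / α * (1 - ‖z‖) ^ (-α) + (2:ℝ)^α / α * (1 - ‖z‖) ^ (-α) :=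
        add_le_add hH hG
    _ = (2 * ((2:ℝ) ^ α / α)) * (1 - ‖z‖) ^ (-α) := by ring

noncomputable def dl (n : ℕ) : ℝ := (2:ℝ) ^ (-(n:ℝ))

lemma dl_pos (n : ℕ) : 0 < dl n := Real.rpow_pos_of_pos (by norm_num) _

lemma dl_le_one (n : ℕ) : dl n ≤ 1 :=
  Real.rpow_le_one_of_one_le_of_nonpos (by norm_num) (neg_nonpos.2 (Nat.cast_nonneg n))

lemma dl_eq_pow (n : ℕ) : dl n = (2:ℝ)⁻¹ ^ n := by
  unfold dl
  rw [Real.rpow_neg (by norm_num), Real.rpow_natCast, inv_pow]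

lemma annuli_cover {z : ℂ} (hz : z ∈ ball (0:ℂ) 1) :
    ∃ n : ℕ, z ∈ ball (0:ℂ) (1 - dl (n+1)) \ ball (0:ℂ) (1 - dl n) := by
  rw [mem_ball_zero_iff] at hz
  have hex : ∃ n : ℕ, ‖z‖ < 1 - dl (n+1) := by
    obtain ⟨n, hn⟩ := exists_pow_lt_of_lt_one (by linarith : (0:ℝ) < 1 - ‖z‖)
      (by norm_num : (2:ℝ)⁻¹ < 1)
    refine ⟨n, ?_⟩
    have : dl (n+1) ≤ (2:ℝ)⁻¹ ^ n := by
      rw [dl_eq_pow]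
      exact pow_le_pow_of_le_one (by norm_num) (by norm_num) (Nat.le_succ n)
    linarith
  classical
  refine ⟨Nat.find hex, ?_, ?_⟩
  · rw [mem_ball_zero_iff]
    exact Nat.find_spec hex
  · rw [mem_ball_zero_iff]
    push_neg
    rcases Nat.eq_zero_or_pos (Nat.find hex) with h0 | hpos
    · rw [h0]
      have h1 : dl 0 = 1 := by unfold dl; norm_num
      rw [h1]
      simpa using norm_nonneg z
    · have := Nat.find_min hex (Nat.sub_lt hpos one_pos)
      push_neg at this
      have heq : Nat.find hex - 1 + 1 = Nat.find hex := Nat.succ_pred_eq_of_pos hpos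
      rwa [heq] at this

lemma dl_succ_le (n : ℕ) : dl (n+1) ≤ dl n := by
  rw [dl_eq_pow, dl_eq_pow]
  exact pow_le_pow_of_le_one (by norm_num) (by norm_num) (Nat.le_succ n)

lemma dl_succ_eq (n : ℕ) : dl (n+1) = dl n / 2 := by
  unfold dl
  push_cast
  rw [neg_add, Real.rpow_add (by norm_num : (0:ℝ) < 2)]
  rw [Real.rpow_neg_one]
  ring

lemma annulus_measure (n : ℕ) :
    volume (ball (0:ℂ) (1 - dl (n+1)) \ ball (0:ℂ) (1 - dl n))
      ≤ ENNReal.ofReal (Real.pi * dl n) := by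
  have hd1 := dl_pos n
  have hd2 := dl_pos (n+1)
  have hd3 := dl_le_one n
  have hd4 := dl_le_one (n+1)
  have hsub : ball (0:ℂ) (1 - dl n) ⊆ ball (0:ℂ) (1 - dl (n+1)) :=
    ball_subset_ball (by linarith [dl_succ_le n])
  rw [measure_diff hsub measurableSet_ball.nullMeasurableSet measure_ball_lt_top.ne,
    Complex.volume_ball, Complex.volume_ball]
  have hpi : (NNReal.pi : ENNReal) = ENNReal.ofReal Real.pi := by
    rw [← NNReal.coe_real_pi, ENNReal.ofReal_coe_nnreal]
  rw [hpi, ← ENNReal.sub_mul (fun _ _ => ENNReal.ofReal_ne_top)]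
  have h1 : ENNReal.ofReal (1 - dl (n+1)) ^ 2 = ENNReal.ofReal ((1 - dl (n+1))^2) := by
    rw [ENNReal.ofReal_pow (by linarith)]
  have h2 : ENNReal.ofReal (1 - dl n) ^ 2 = ENNReal.ofReal ((1 - dl n)^2) := by
    rw [ENNReal.ofReal_pow (by linarith)]
  have hmono := dl_succ_le n
  rw [h1, h2, ← ENNReal.ofReal_sub _ (sq_nonneg _), ← ENNReal.ofReal_mul (by nlinarith)]
  apply ENNReal.ofReal_le_ofReal
  have hhalf := dl_succ_eq n
  have key : (1 - dl (n+1))^2 - (1 - dl n)^2 ≤ dl n := by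
    rw [hhalf]; nlinarith
  nlinarith [Real.pi_pos, mul_le_mul_of_nonneg_right key Real.pi_pos.le]

lemma lintegral_bound {α C p : ℝ} (hα : 0 < α) (hC : 0 ≤ C) (hp : 0 < p) (hpα : p * α < 1)
    {f : ℂ → ℂ}
    (hgrow : ∀ z ∈ ball (0:ℂ) 1,
      ‖f z‖ ≤ C * (1 - ‖z‖) ^ (-α)) :
    (∫⁻ z in ball (0:ℂ) 1, ENNReal.ofReal (‖f z‖ ^ p)) < ⊤ := by
  set A : ℕ → Set ℂ := fun n => ball (0:ℂ) (1 - dl (n+1)) \ ball (0:ℂ) (1 - dl n) with hA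
  have hcover : ball (0:ℂ) 1 ⊆ ⋃ n, A n := fun z hz => Set.mem_iUnion.2 (annuli_cover hz)
  -- pointwise bound on each annulus
  have hbound : ∀ n : ℕ, ∀ z ∈ A n,
      ‖f z‖ ^ p ≤ C ^ p * (2:ℝ) ^ ((((n:ℝ)+1)) * α * p) := by
    intro n z hz
    have hz1 : z ∈ ball (0:ℂ) 1 :=
      ball_subset_ball (by linarith [dl_pos (n+1)]) hz.1
    have hzr : ‖z‖ < 1 - dl (n+1) := by
      have := hz.1
      rwa [mem_ball_zero_iff] at this
    have hp1 : (1 - ‖z‖) ^ (-α) ≤ (dl (n+1)) ^ (-α) :=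
      Real.rpow_le_rpow_of_nonpos (dl_pos (n+1)) (by linarith) (by linarith)
    have hp2 : (dl (n+1)) ^ (-α) = (2:ℝ) ^ ((((n:ℝ)+1)) * α) := by
      unfold dl
      rw [← Real.rpow_mul (by norm_num : (0:ℝ) ≤ 2)]
      push_cast
      ring_nf
    have hfz : ‖f z‖ ≤ C * (2:ℝ) ^ ((((n:ℝ)+1)) * α) := by
      calc ‖f z‖ ≤ C * (1 - ‖z‖) ^ (-α) := hgrow z hz1
        _ ≤ C * (dl (n+1)) ^ (-α) := mul_le_mul_of_nonneg_left hp1 hC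
        _ = C * (2:ℝ) ^ ((((n:ℝ)+1)) * α) := by rw [hp2]
    calc ‖f z‖ ^ p ≤ (C * (2:ℝ) ^ ((((n:ℝ)+1)) * α)) ^ p :=
          Real.rpow_le_rpow (norm_nonneg _) hfz hp.le
      _ = C ^ p * ((2:ℝ) ^ ((((n:ℝ)+1)) * α)) ^ p := Real.mul_rpow hC (by positivity)
      _ = C ^ p * (2:ℝ) ^ ((((n:ℝ)+1)) * α * p) := by
          rw [← Real.rpow_mul (by norm_num : (0:ℝ) ≤ 2)]
  -- per-annulus integral bound
  set q : ENNReal := ENNReal.ofReal ((2:ℝ) ^ (α * p - 1)) with hq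
  set D : ENNReal := ENNReal.ofReal (C ^ p * (2:ℝ) ^ (α * p) * Real.pi) with hD
  have hterm : ∀ n : ℕ,
      (∫⁻ z in A n, ENNReal.ofReal (‖f z‖ ^ p)) ≤ D * q ^ n := by
    intro n
    have hmeas : MeasurableSet (A n) := measurableSet_ball.diff measurableSet_ball
    have h1 : (∫⁻ z in A n, ENNReal.ofReal (‖f z‖ ^ p))
        ≤ ∫⁻ _ in A n, ENNReal.ofReal (C ^ p * (2:ℝ) ^ ((((n:ℝ)+1)) * α * p)) := by
      refine setLIntegral_mono' hmeas ?_
      intro z hz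
      exact ENNReal.ofReal_le_ofReal (hbound n z hz)
    rw [setLIntegral_const] at h1
    have h2 : volume (A n) ≤ ENNReal.ofReal (Real.pi * dl n) := annulus_measure n
    have h3 : (∫⁻ z in A n, ENNReal.ofReal (‖f z‖ ^ p))
        ≤ ENNReal.ofReal (C ^ p * (2:ℝ) ^ ((((n:ℝ)+1)) * α * p)) *
          ENNReal.ofReal (Real.pi * dl n) :=
      h1.trans (mul_le_mul_right h2 _)
    refine h3.trans (le_of_eq ?_)
    rw [← ENNReal.ofReal_mul (by positivity)]
    rw [hD, hq]
    have hqpow : (ENNReal.ofReal ((2:ℝ) ^ (α * p - 1))) ^ n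
        = ENNReal.ofReal (((2:ℝ) ^ (α * p - 1)) ^ n) := by
      rw [ENNReal.ofReal_pow (by positivity)]
    rw [hqpow, ← ENNReal.ofReal_mul (by positivity)]
    congr 1
    have e1 : ((2:ℝ) ^ (α * p - 1)) ^ n = (2:ℝ) ^ ((α * p - 1) * n) := by
      rw [← Real.rpow_natCast ((2:ℝ) ^ (α * p - 1)) n,
        ← Real.rpow_mul (by norm_num : (0:ℝ) ≤ 2)]
    rw [e1]
    unfold dl
    rw [show C ^ p * (2:ℝ) ^ ((((n:ℝ)+1)) * α * p) * (Real.pi * (2:ℝ) ^ (-(n:ℝ)))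
        = C ^ p * Real.pi * ((2:ℝ) ^ ((((n:ℝ)+1)) * α * p) * (2:ℝ) ^ (-(n:ℝ))) by ring]
    rw [show C ^ p * (2:ℝ) ^ (α * p) * Real.pi * (2:ℝ) ^ ((α * p - 1) * (n:ℝ))
        = C ^ p * Real.pi * ((2:ℝ) ^ (α * p) * (2:ℝ) ^ ((α * p - 1) * (n:ℝ))) by ring]
    congr 1
    rw [← Real.rpow_add (by norm_num : (0:ℝ) < 2), ← Real.rpow_add (by norm_num : (0:ℝ) < 2)]
    congr 1
    ring
  have hqlt : q < 1 := by
    rw [hq]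
    refine ENNReal.ofReal_lt_one.2 ?_
    exact Real.rpow_lt_one_of_one_lt_of_neg (by norm_num) (by linarith)
  calc (∫⁻ z in ball (0:ℂ) 1, ENNReal.ofReal (‖f z‖ ^ p))
      ≤ ∫⁻ z in ⋃ n, A n, ENNReal.ofReal (‖f z‖ ^ p) :=
        lintegral_mono_set hcover
    _ ≤ ∑' n, ∫⁻ z in A n, ENNReal.ofReal (‖f z‖ ^ p) :=
        lintegral_iUnion_le _ _
    _ ≤ ∑' n, D * q ^ n := ENNReal.tsum_le_tsum hterm
    _ = D * ∑' n, q ^ n := ENNReal.tsum_mul_left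
    _ = D * (1 - q)⁻¹ := by rw [ENNReal.tsum_geometric]
    _ < ⊤ := ENNReal.mul_lt_top ENNReal.ofReal_lt_top
        (ENNReal.inv_lt_top.2 (tsub_pos_of_lt hqlt))

/-- **Theorem 4 (i).** Every `f ∈ S_H(K)` belongs to the harmonic Bergman space `aᵖ`
for all `0 < p < 1/α_K`. -/
theorem shk_mem_bergman (K : ℝ) (hK : 1 ≤ K) (h g : ℂ → ℂ) (hf : IsSHK K h g)
    (p : ℝ) (hp : 0 < p) (hpα : p < 1 / orderSHK K) :
    (∫⁻ z in ball (0 : ℂ) 1,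
        ENNReal.ofReal (‖h z + (starRingEnd ℂ) (g z)‖ ^ p)) < ⊤ := by
  have hα : 0 < orderSHK K := one_div_pos.mp (hp.trans hpα)
  have hpα' : p * orderSHK K < 1 := by
    rw [lt_div_iff₀ hα] at hpα
    linarith
  by_cases hB : BddAbove {x : ℝ | ∃ h g : ℂ → ℂ, IsSHK K h g ∧
      x = ‖deriv (deriv h) 0‖ / 2}
  · have hgrow := f_growth hf hB hα
    exact lintegral_bound hα (by positivity) hp hpα' hgrow
  · exfalso
    have h0 : orderSHK K = 0 := Real.sSup_of_not_bddAbove hB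
    rw [h0] at hα
    exact lt_irrefl 0 hα
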